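/- Let σ and τ be Kubo–Ando operator means. For all positive definite A, B: (AτB)^{-1}(AτB - AσB)(AτB)^{-1} ≤ (AσB)^{-1} - (AτB)^{-1} ≤ (AσB)^{-1}(AτB - AσB)(AσB)^{-1} in the Löwner order. -/

import Mathlib

open Matrix ComplexOrder

/-- Matrix square root via the real continuous functional calculus. -/
noncomputable def msqrt {n : ℕ} (A : Matrix (Fin n) (Fin n) ℂ) :
    Matrix (Fin n) (Fin n) ℂ :=
  cfc Real.sqrt A

/-- The Kubo–Ando mean associated to a representing function `f`:
`A σ_f B = A^{1/2} f(A^{-1/2} B A^{-1/2}) A^{1/2}`. -/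
noncomputable def opMean {n : ℕ} (f : ℝ → ℝ) (A B : Matrix (Fin n) (Fin n) ℂ) :
    Matrix (Fin n) (Fin n) ℂ :=
  msqrt A * cfc f ((msqrt A)⁻¹ * B * (msqrt A)⁻¹) * msqrt A

/-- A function `f : ℝ → ℝ` is operator monotone on `[0,∞)` if it is monotone for the
Löwner order on positive semidefinite matrices of every size. -/
def OperatorMonotone (f : ℝ → ℝ) : Prop :=
  ∀ (n : ℕ) (A B : Matrix (Fin n) (Fin n) ℂ), A.PosSemidef → B.PosSemidef →
    (B - A).PosSemidef → (cfc f B - cfc f A).PosSemidef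

variable {k : ℕ}

/-- diagonal entries of a PSD matrix are nonneg. -/
lemma psd_diag {M : Matrix (Fin k) (Fin k) ℂ} (hM : M.PosSemidef) (i : Fin k) :
    0 ≤ M i i := by
  exact hM.diag_nonneg

/-- conjugation of a PosDef matrix by an invertible matrix. -/
lemma posDef_conj {M B : Matrix (Fin k) (Fin k) ℂ} (hM : M.PosDef) (hB : IsUnit B) :
    (Bᴴ * M * B).PosDef := by
  refine Matrix.PosDef.of_dotProduct_mulVec_pos (Matrix.isHermitian_conjTranspose_mul_mul B hM.1) fun x hx => ?_
  have hBx : B *ᵥ x ≠ 0 := by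
    intro h
    apply hx
    have : B⁻¹ *ᵥ (B *ᵥ x) = x := by
      rw [Matrix.mulVec_mulVec, Matrix.nonsing_inv_mul _ ((Matrix.isUnit_iff_isUnit_det _).mp hB),
        Matrix.one_mulVec]
    rw [h, Matrix.mulVec_zero] at this
    exact this.symm
  simpa only [star_mulVec, dotProduct_mulVec, Matrix.vecMul_vecMul] using hM.dotProduct_mulVec_pos hBx

/-- cfc of a positive function at a PosDef matrix is PosDef. -/
lemma posDef_cfc {M : Matrix (Fin k) (Fin k) ℂ} (hM : M.PosDef) {f : ℝ → ℝ}
    (hf : ∀ t, 0 < t → 0 < f t) : (cfc f M).PosDef := by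
  have hH := hM.1
  rw [hH.cfc_eq]
  unfold Matrix.IsHermitian.cfc
  have hD : (Matrix.diagonal (RCLike.ofReal ∘ f ∘ hH.eigenvalues) :
      Matrix (Fin k) (Fin k) ℂ).PosDef := by
    refine .diagonal fun i => ?_
    exact RCLike.ofReal_pos.mpr (hf _ (hM.eigenvalues_pos i))
  have hU : IsUnit (star (hH.eigenvectorUnitary : Matrix (Fin k) (Fin k) ℂ)) := by
    rw [Matrix.isUnit_iff_isUnit_det]
    refine IsUnit.of_mul_eq_one (hH.eigenvectorUnitary : Matrix (Fin k) (Fin k) ℂ).det ?_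
    rw [← Matrix.det_mul, Unitary.star_mul_self_of_mem hH.eigenvectorUnitary.2, Matrix.det_one]
  have := posDef_conj hD hU
  rwa [Matrix.star_eq_conjTranspose, Matrix.conjTranspose_conjTranspose] at this

/-- The key inequality: for positive definite `X, Y`,
`Y⁻¹(Y-X)Y⁻¹ ≤ X⁻¹ - Y⁻¹`. -/
lemma key_ineq {X Y : Matrix (Fin k) (Fin k) ℂ} (hX : X.PosDef) (hY : Y.PosDef) :
    ((X⁻¹ - Y⁻¹) - Y⁻¹ * (Y - X) * Y⁻¹).PosSemidef := by
  have hXX : X * X⁻¹ = 1 := Matrix.mul_nonsing_inv _ ((Matrix.isUnit_iff_isUnit_det _).mp hX.isUnit)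
  have hX'X : X⁻¹ * X = 1 := Matrix.nonsing_inv_mul _ ((Matrix.isUnit_iff_isUnit_det _).mp hX.isUnit)
  have hYY : Y * Y⁻¹ = 1 := Matrix.mul_nonsing_inv _ ((Matrix.isUnit_iff_isUnit_det _).mp hY.isUnit)
  have hY'Y : Y⁻¹ * Y = 1 := Matrix.nonsing_inv_mul _ ((Matrix.isUnit_iff_isUnit_det _).mp hY.isUnit)
  have hconj : (1 - X * Y⁻¹)ᴴ = 1 - Y⁻¹ * X := by
    rw [Matrix.conjTranspose_sub, Matrix.conjTranspose_one, Matrix.conjTranspose_mul,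
      hY.1.inv.eq, hX.1.eq]
  have hEq : (1 - X * Y⁻¹)ᴴ * X⁻¹ * (1 - X * Y⁻¹) =
      (X⁻¹ - Y⁻¹) - Y⁻¹ * (Y - X) * Y⁻¹ := by
    rw [hconj]
    have e1 : (1 - Y⁻¹ * X) * X⁻¹ = X⁻¹ - Y⁻¹ := by
      rw [Matrix.sub_mul, Matrix.one_mul, Matrix.mul_assoc, hXX, Matrix.mul_one]
    rw [e1, Matrix.sub_mul, Matrix.mul_sub, Matrix.mul_sub, Matrix.mul_one, Matrix.mul_one,
      Matrix.mul_sub, Matrix.sub_mul, ← Matrix.mul_assoc, ← Matrix.mul_assoc, hX'X,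
      Matrix.one_mul, Matrix.mul_assoc Y⁻¹ Y, hYY, Matrix.mul_one]
  rw [← hEq]
  exact hX.inv.posSemidef.conjTranspose_mul_mul_same _

lemma posDef_opMean {f : ℝ → ℝ} (hf : ∀ t, 0 < t → 0 < f t)
    {A B : Matrix (Fin k) (Fin k) ℂ} (hA : A.PosDef) (hB : B.PosDef) :
    (opMean f A B).PosDef := by
  have hS : (msqrt A).PosDef := posDef_cfc hA fun t ht => Real.sqrt_pos.mpr ht
  have hSi : ((msqrt A)⁻¹).PosDef := hS.inv
  have hC : ((msqrt A)⁻¹ * B * (msqrt A)⁻¹).PosDef := by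
    have := posDef_conj hB hSi.isUnit
    rwa [hSi.1.eq] at this
  have hF : (cfc f ((msqrt A)⁻¹ * B * (msqrt A)⁻¹)).PosDef := posDef_cfc hC hf
  have := posDef_conj hF hS.isUnit
  rwa [hS.1.eq] at this

lemma opMono_mono {f : ℝ → ℝ} (hf : OperatorMonotone f) {a b : ℝ} (ha : 0 ≤ a) (hab : a ≤ b) :
    f a ≤ f b := by
  have hpsd : ∀ c : ℝ, 0 ≤ c →
      (algebraMap ℝ (Matrix (Fin 1) (Fin 1) ℂ) c).PosSemidef := by
    intro c hc
    rw [Matrix.algebraMap_eq_diagonal]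
    exact Matrix.posSemidef_diagonal_iff.mpr fun i => by
      simpa using Complex.zero_le_real.mpr hc
  have hd : (algebraMap ℝ (Matrix (Fin 1) (Fin 1) ℂ) b) -
      (algebraMap ℝ (Matrix (Fin 1) (Fin 1) ℂ) a) = algebraMap ℝ _ (b - a) := by
    rw [map_sub]
  have h := hf 1 (algebraMap ℝ _ a) (algebraMap ℝ _ b) (hpsd a ha) (hpsd b (ha.trans hab))
    (by rw [hd]; exact hpsd _ (by linarith))
  rw [cfc_algebraMap, cfc_algebraMap, ← map_sub] at h
  have h0 := psd_diag h 0
  rw [Matrix.algebraMap_matrix_apply] at h0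
  simp only [if_true, Complex.coe_algebraMap, Complex.zero_le_real] at h0
  linarith

lemma det_ne_spec {M : Matrix (Fin 2) (Fin 2) ℂ} {y : ℝ} (hy : y ∈ spectrum ℝ M)
    (h : (algebraMap ℝ (Matrix (Fin 2) (Fin 2) ℂ) y - M).det ≠ 0) : False := by
  rw [spectrum.mem_iff] at hy
  exact hy ((Matrix.isUnit_iff_isUnit_det _).mpr (isUnit_iff_ne_zero.mpr h))

lemma opMono_pos {f : ℝ → ℝ} (hf : OperatorMonotone f) (hfnn : ∀ t ≥ (0:ℝ), 0 ≤ f t)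
    (hf1 : f 1 = 1) : ∀ t : ℝ, 0 < t → 0 < f t := by
  intro t ht
  rcases le_or_gt 1 t with h1 | h1
  · have := opMono_mono hf zero_le_one h1
    rw [hf1] at this; linarith
  · set ε : ℝ := Real.sqrt (t/2) with hεdef
    set c : ℝ := Real.sqrt (1 - t/2) with hcdef
    have hε2 : ε * ε = t/2 := Real.mul_self_sqrt (by linarith)
    have hc2 : c * c = 1 - t/2 := Real.mul_self_sqrt (by linarith)
    set x : Matrix (Fin 1) (Fin 2) ℂ := !![(ε:ℂ), (c:ℂ)] with hxdef
    set w : Matrix (Fin 1) (Fin 2) ℂ := !![(ε:ℂ), -(c:ℂ)] with hwdef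
    set A2 : Matrix (Fin 2) (Fin 2) ℂ := xᴴ * x with hA2def
    set B2 : Matrix (Fin 2) (Fin 2) ℂ := Matrix.diagonal ![(t:ℂ), 2] with hB2def
    have psdA : A2.PosSemidef := Matrix.posSemidef_conjTranspose_mul_self x
    have psdB : B2.PosSemidef := by
      refine Matrix.posSemidef_diagonal_iff.mpr fun i => ?_
      fin_cases i
      · simpa using Complex.zero_le_real.mpr ht.le
      · simpa using Complex.zero_le_real.mpr (by norm_num : (0:ℝ) ≤ 2)
    have hsplit : B2 = A2 + (wᴴ * w + Matrix.diagonal ![0,(t:ℂ)]) := by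
      ext i j
      fin_cases i <;> fin_cases j <;>
        simp [hA2def, hB2def, hxdef, hwdef, Matrix.mul_apply, Fin.sum_univ_one,
          Matrix.conjTranspose_apply, Complex.conj_ofReal, Matrix.diagonal] <;>
        norm_cast <;> nlinarith [hε2, hc2]
    have psdDiff : (B2 - A2).PosSemidef := by
      rw [hsplit, add_sub_cancel_left]
      refine (Matrix.posSemidef_conjTranspose_mul_self w).add
        (Matrix.posSemidef_diagonal_iff.mpr fun i => ?_)
      fin_cases i
      · simp
      · simpa using Complex.zero_le_real.mpr ht.le
    have h := hf 2 A2 B2 psdA psdB psdDiff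
    have specB : ∀ y : ℝ, y ∈ spectrum ℝ B2 → y = t ∨ y = 2 := by
      intro y hy
      by_contra hcon
      push_neg at hcon
      refine det_ne_spec hy ?_
      have hdet : (algebraMap ℝ (Matrix (Fin 2) (Fin 2) ℂ) y - B2).det
          = ((y:ℂ) - t) * ((y:ℂ) - 2) := by
        rw [Matrix.det_fin_two]
        simp [hB2def, Matrix.algebraMap_matrix_apply, Matrix.diagonal]
      rw [hdet]
      exact mul_ne_zero (sub_ne_zero.mpr (by exact_mod_cast hcon.1))
        (sub_ne_zero.mpr (by exact_mod_cast hcon.2))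
    have specA : ∀ y : ℝ, y ∈ spectrum ℝ A2 → y = 0 ∨ y = 1 := by
      intro y hy
      by_contra hcon
      push_neg at hcon
      refine det_ne_spec hy ?_
      have hεc : (ε:ℂ) * ε + (c:ℂ) * c = 1 := by
        norm_cast
        linarith [hε2, hc2]
      have hdet : (algebraMap ℝ (Matrix (Fin 2) (Fin 2) ℂ) y - A2).det
          = (y:ℂ) * ((y:ℂ) - 1) := by
        rw [Matrix.det_fin_two]
        simp [hA2def, hxdef, Matrix.algebraMap_matrix_apply, Matrix.mul_apply,
          Fin.sum_univ_one, Matrix.conjTranspose_apply, Complex.conj_ofReal]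
        linear_combination (-(y:ℂ)) * hεc
      rw [hdet]
      exact mul_ne_zero (by exact_mod_cast hcon.1)
        (sub_ne_zero.mpr (by exact_mod_cast hcon.2))
    have hsaB : IsSelfAdjoint B2 := psdB.1.isSelfAdjoint
    have hsaA : IsSelfAdjoint A2 := psdA.1.isSelfAdjoint
    have h2t : (2:ℝ) - t ≠ 0 := by linarith
    set β : ℝ := (f 2 - f t)/(2 - t) with hβdef
    have hfB : cfc f B2 = algebraMap ℝ (Matrix (Fin 2) (Fin 2) ℂ) (f t - β * t) + β • B2 := by
      rw [← cfc_const_mul_id β B2 hsaB, ← cfc_const_add (f t - β * t) _ B2 (by fun_prop) hsaB]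
      refine cfc_congr fun y hy => ?_
      rcases specB y hy with rfl | rfl
      · ring
      · have hb : β * (2 - t) = f 2 - f t := by rw [hβdef]; exact div_mul_cancel₀ _ h2t
        linear_combination -hb
    have hfA : cfc f A2 = algebraMap ℝ (Matrix (Fin 2) (Fin 2) ℂ) (f 0) + (1 - f 0) • A2 := by
      rw [← cfc_const_mul_id (1 - f 0) A2 hsaA, ← cfc_const_add (f 0) _ A2 (by fun_prop) hsaA]
      refine cfc_congr fun y hy => ?_
      rcases specA y hy with rfl | rfl
      · ring
      · rw [hf1]; ring
    have h00 := psd_diag h 0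
    rw [Matrix.sub_apply, hfB, hfA] at h00
    have eB : (algebraMap ℝ (Matrix (Fin 2) (Fin 2) ℂ) (f t - β * t) + β • B2) 0 0
        = ((f t : ℝ) : ℂ) := by
      simp only [Matrix.add_apply, Matrix.smul_apply, Matrix.algebraMap_matrix_apply,
        if_pos rfl, if_true, hB2def, Matrix.diagonal_apply_eq, Matrix.cons_val_zero,
        Complex.real_smul, Complex.coe_algebraMap]
      push_cast
      ring
    have eA : (algebraMap ℝ (Matrix (Fin 2) (Fin 2) ℂ) (f 0) + (1 - f 0) • A2) 0 0
        = ((f 0 + (1 - f 0) * (t/2) : ℝ) : ℂ) := by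
      simp only [Matrix.add_apply, Matrix.smul_apply, Matrix.algebraMap_matrix_apply,
        if_pos rfl, hA2def, hxdef, Matrix.mul_apply, Fin.sum_univ_one,
        Matrix.conjTranspose_apply, Complex.conj_ofReal, Matrix.cons_val_zero,
        Matrix.cons_val', Matrix.cons_val_fin_one, Matrix.empty_val', Matrix.of_apply,
        Matrix.head_cons, if_true, Complex.star_def,
        Complex.real_smul, Complex.coe_algebraMap]
      have hee : (ε:ℂ) * ε = ((t/2 : ℝ) : ℂ) := by norm_cast
      rw [hee]
      push_cast
      ring
    rw [eB, eA, ← Complex.ofReal_sub, Complex.zero_le_real] at h00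
    nlinarith [hfnn 0 le_rfl, mul_nonneg (hfnn 0 le_rfl) (by linarith : (0:ℝ) ≤ 1 - t/2)]


/-- For Kubo–Ando means `σ`, `τ` with representing functions `f`, `g`:
`(AτB)⁻¹(AτB - AσB)(AτB)⁻¹ ≤ (AσB)⁻¹ - (AτB)⁻¹ ≤ (AσB)⁻¹(AτB - AσB)(AσB)⁻¹`. -/
theorem inverse_mean_difference_bounds (f g : ℝ → ℝ)
    (hf : OperatorMonotone f) (hfnn : ∀ t ≥ (0:ℝ), 0 ≤ f t) (hf1 : f 1 = 1)
    (hg : OperatorMonotone g) (hgnn : ∀ t ≥ (0:ℝ), 0 ≤ g t) (hg1 : g 1 = 1)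
    (n : ℕ) (A B : Matrix (Fin n) (Fin n) ℂ) (hA : A.PosDef) (hB : B.PosDef) :
    (((opMean f A B)⁻¹ - (opMean g A B)⁻¹) -
      (opMean g A B)⁻¹ * (opMean g A B - opMean f A B) * (opMean g A B)⁻¹).PosSemidef ∧
    ((opMean f A B)⁻¹ * (opMean g A B - opMean f A B) * (opMean f A B)⁻¹ -
      ((opMean f A B)⁻¹ - (opMean g A B)⁻¹)).PosSemidef := by
  have hfpos := opMono_pos hf hfnn hf1
  have hgpos := opMono_pos hg hgnn hg1
  have hX : (opMean f A B).PosDef := posDef_opMean hfpos hA hB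
  have hY : (opMean g A B).PosDef := posDef_opMean hgpos hA hB
  refine ⟨key_ineq hX hY, ?_⟩
  have h := key_ineq hY hX
  have e : ((opMean g A B)⁻¹ - (opMean f A B)⁻¹) -
      (opMean f A B)⁻¹ * (opMean f A B - opMean g A B) * (opMean f A B)⁻¹
      = (opMean f A B)⁻¹ * (opMean g A B - opMean f A B) * (opMean f A B)⁻¹ -
      ((opMean f A B)⁻¹ - (opMean g A B)⁻¹) := by
    simp only [Matrix.mul_sub, Matrix.sub_mul]
    abel
  rwa [e] at h
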